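/- In the root system F_4 with long roots Δ_long = {±e_i ± e_j : 1 ≤ i < j ≤ 4} and short roots Δ_sh = Δ_sh1 ∪ Δ_sh2 ∪ Δ_sh3 where Δ_sh1 = {±e_i : 1 ≤ i ≤ 4}, Δ_sh2 = {(1/2)Σε_i e_i : ε_i = ±1, ε_1ε_2ε_3ε_4 = 1}, Δ_sh3 = {(1/2)Σε_i e_i : ε_i = ±1, ε_1ε_2ε_3ε_4 = −1}, a pair (α, β) of roots satisfies that both α + β and α − β are roots if and only if α and β lie in the same Δ_shi for some i ∈ {1,2,3} and α ≠ ±β. -/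

import Mathlib

open scoped RealInnerProductSpace

/-- The standard basis vector `e_i` of `ℝ⁴`. -/
noncomputable def e (i : Fin 4) : EuclideanSpace ℝ (Fin 4) :=
  EuclideanSpace.single i 1

/-- The set `{±e_i ± e_j}` for fixed `i, j`. -/
def pmSet (i j : Fin 4) : Set (EuclideanSpace ℝ (Fin 4)) :=
  {v | ∃ ε δ : ℝ, (ε = 1 ∨ ε = -1) ∧ (δ = 1 ∨ δ = -1) ∧ v = ε • e i + δ • e j}

/-- Long roots of `F₄`: `±e_i ± e_j`, `i < j`. -/
def LongF4 : Set (EuclideanSpace ℝ (Fin 4)) :=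
  {v | ∃ i j : Fin 4, i < j ∧ v ∈ pmSet i j}

/-- Short roots of type 1: `±e_i`. -/
def Sh1 : Set (EuclideanSpace ℝ (Fin 4)) :=
  {v | ∃ i : Fin 4, v = e i ∨ v = -e i}

/-- Short roots of type 2: `(1/2)Σ ε_i e_i` with `ε₁ε₂ε₃ε₄ = 1`. -/
def Sh2 : Set (EuclideanSpace ℝ (Fin 4)) :=
  {v | ∃ ε : Fin 4 → ℝ, (∀ i, ε i = 1 ∨ ε i = -1) ∧ ε 0 * ε 1 * ε 2 * ε 3 = 1 ∧
    v = (1 / 2 : ℝ) • ∑ i, ε i • e i}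

/-- Short roots of type 3: `(1/2)Σ ε_i e_i` with `ε₁ε₂ε₃ε₄ = −1`. -/
def Sh3 : Set (EuclideanSpace ℝ (Fin 4)) :=
  {v | ∃ ε : Fin 4 → ℝ, (∀ i, ε i = 1 ∨ ε i = -1) ∧ ε 0 * ε 1 * ε 2 * ε 3 = -1 ∧
    v = (1 / 2 : ℝ) • ∑ i, ε i • e i}

/-- The root system `F₄`. -/
def ΔF4 : Set (EuclideanSpace ℝ (Fin 4)) := LongF4 ∪ Sh1 ∪ Sh2 ∪ Sh3

abbrev V : Type := ℤ × ℤ × ℤ × ℤ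

noncomputable def ψ (w : V) : EuclideanSpace ℝ (Fin 4) :=
  (1/2 : ℝ) • ((w.1:ℝ) • e 0 + (w.2.1:ℝ) • e 1 + (w.2.2.1:ℝ) • e 2 + (w.2.2.2:ℝ) • e 3)

def R1L : List V := [(2,0,0,0), (-2,0,0,0), (0,2,0,0), (0,-2,0,0), (0,0,2,0), (0,0,-2,0), (0,0,0,2), (0,0,0,-2)]

def R2L : List V := [(1,1,1,1), (1,1,-1,-1), (1,-1,1,-1), (1,-1,-1,1), (-1,1,1,-1), (-1,1,-1,1), (-1,-1,1,1), (-1,-1,-1,-1)]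

def R3L : List V := [(1,1,1,-1), (1,1,-1,1), (1,-1,1,1), (1,-1,-1,-1), (-1,1,1,1), (-1,1,-1,-1), (-1,-1,1,-1), (-1,-1,-1,1)]

def RlongL : List V := [(2,2,0,0), (2,-2,0,0), (-2,2,0,0), (-2,-2,0,0), (2,0,2,0), (2,0,-2,0), (-2,0,2,0), (-2,0,-2,0), (2,0,0,2), (2,0,0,-2), (-2,0,0,2), (-2,0,0,-2), (0,2,2,0), (0,2,-2,0), (0,-2,2,0), (0,-2,-2,0), (0,2,0,2), (0,2,0,-2), (0,-2,0,2), (0,-2,0,-2), (0,0,2,2), (0,0,2,-2), (0,0,-2,2), (0,0,-2,-2)]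

def Rall : List V := RlongL ++ R1L ++ R2L ++ R3L


lemma psi_add (a b : V) : ψ (a+b) = ψ a + ψ b := by
  simp only [ψ, Prod.fst_add, Prod.snd_add]; push_cast; module

lemma psi_sub (a b : V) : ψ (a-b) = ψ a - ψ b := by
  simp only [ψ, Prod.fst_sub, Prod.snd_sub]; push_cast; module

lemma psi_neg (a : V) : ψ (-a) = - ψ a := by
  simp only [ψ, Prod.fst_neg, Prod.snd_neg]; push_cast; module

lemma psi_inj : Function.Injective ψ := by
  intro a b h
  have h0 := congrArg (· 0) h
  have h1 := congrArg (· 1) h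
  have h2 := congrArg (· 2) h
  have h3 := congrArg (· 3) h
  simp [ψ, e, EuclideanSpace.single_apply, PiLp.add_apply, PiLp.smul_apply] at h0 h1 h2 h3
  obtain ⟨a1,a2,a3,a4⟩ := a
  obtain ⟨b1,b2,b3,b4⟩ := b
  simp_all


lemma sh1_fwd {v : EuclideanSpace ℝ (Fin 4)} (h : v ∈ Sh1) : ∃ w ∈ R1L, v = ψ w := by
  obtain ⟨i, h⟩ := h
  fin_cases i <;> rcases h with rfl | rfl
  · exact ⟨(2,0,0,0), by decide, by simp only [ψ]; push_cast; module⟩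
  · exact ⟨(-2,0,0,0), by decide, by simp only [ψ]; push_cast; module⟩
  · exact ⟨(0,2,0,0), by decide, by simp only [ψ]; push_cast; module⟩
  · exact ⟨(0,-2,0,0), by decide, by simp only [ψ]; push_cast; module⟩
  · exact ⟨(0,0,2,0), by decide, by simp only [ψ]; push_cast; module⟩
  · exact ⟨(0,0,-2,0), by decide, by simp only [ψ]; push_cast; module⟩
  · exact ⟨(0,0,0,2), by decide, by simp only [ψ]; push_cast; module⟩
  · exact ⟨(0,0,0,-2), by decide, by simp only [ψ]; push_cast; module⟩


lemma sh2_fwd {v : EuclideanSpace ℝ (Fin 4)} (h : v ∈ Sh2) : ∃ w ∈ R2L, v = ψ w := by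
  obtain ⟨ε, hε, hp, rfl⟩ := h
  rw [show (∑ i, ε i • e i) = ε 0 • e 0 + ε 1 • e 1 + ε 2 • e 2 + ε 3 • e 3 from Fin.sum_univ_four _]
  rcases hε 0 with h0 | h0 <;> rcases hε 1 with h1 | h1 <;>
    rcases hε 2 with h2 | h2 <;> rcases hε 3 with h3 | h3 <;>
    rw [h0, h1, h2, h3] at hp ⊢ <;> try norm_num at hp
  · exact ⟨(1,1,1,1), by decide, by simp only [ψ]; push_cast; module⟩
  · exact ⟨(1,1,-1,-1), by decide, by simp only [ψ]; push_cast; module⟩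
  · exact ⟨(1,-1,1,-1), by decide, by simp only [ψ]; push_cast; module⟩
  · exact ⟨(1,-1,-1,1), by decide, by simp only [ψ]; push_cast; module⟩
  · exact ⟨(-1,1,1,-1), by decide, by simp only [ψ]; push_cast; module⟩
  · exact ⟨(-1,1,-1,1), by decide, by simp only [ψ]; push_cast; module⟩
  · exact ⟨(-1,-1,1,1), by decide, by simp only [ψ]; push_cast; module⟩
  · exact ⟨(-1,-1,-1,-1), by decide, by simp only [ψ]; push_cast; module⟩


lemma sh3_fwd {v : EuclideanSpace ℝ (Fin 4)} (h : v ∈ Sh3) : ∃ w ∈ R3L, v = ψ w := by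
  obtain ⟨ε, hε, hp, rfl⟩ := h
  rw [show (∑ i, ε i • e i) = ε 0 • e 0 + ε 1 • e 1 + ε 2 • e 2 + ε 3 • e 3 from Fin.sum_univ_four _]
  rcases hε 0 with h0 | h0 <;> rcases hε 1 with h1 | h1 <;>
    rcases hε 2 with h2 | h2 <;> rcases hε 3 with h3 | h3 <;>
    rw [h0, h1, h2, h3] at hp ⊢ <;> try norm_num at hp
  · exact ⟨(1,1,1,-1), by decide, by simp only [ψ]; push_cast; module⟩
  · exact ⟨(1,1,-1,1), by decide, by simp only [ψ]; push_cast; module⟩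
  · exact ⟨(1,-1,1,1), by decide, by simp only [ψ]; push_cast; module⟩
  · exact ⟨(1,-1,-1,-1), by decide, by simp only [ψ]; push_cast; module⟩
  · exact ⟨(-1,1,1,1), by decide, by simp only [ψ]; push_cast; module⟩
  · exact ⟨(-1,1,-1,-1), by decide, by simp only [ψ]; push_cast; module⟩
  · exact ⟨(-1,-1,1,-1), by decide, by simp only [ψ]; push_cast; module⟩
  · exact ⟨(-1,-1,-1,1), by decide, by simp only [ψ]; push_cast; module⟩


lemma long_fwd {v : EuclideanSpace ℝ (Fin 4)} (h : v ∈ LongF4) : ∃ w ∈ RlongL, v = ψ w := by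
  obtain ⟨i, j, hij, ε, δ, hε, hδ, rfl⟩ := h
  fin_cases i <;> fin_cases j <;> try exact absurd hij (by decide)
  all_goals rcases hε with rfl | rfl <;> rcases hδ with rfl | rfl
  · exact ⟨(2,2,0,0), by decide, by simp only [ψ]; push_cast; module⟩
  · exact ⟨(2,-2,0,0), by decide, by simp only [ψ]; push_cast; module⟩
  · exact ⟨(-2,2,0,0), by decide, by simp only [ψ]; push_cast; module⟩
  · exact ⟨(-2,-2,0,0), by decide, by simp only [ψ]; push_cast; module⟩
  · exact ⟨(2,0,2,0), by decide, by simp only [ψ]; push_cast; module⟩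
  · exact ⟨(2,0,-2,0), by decide, by simp only [ψ]; push_cast; module⟩
  · exact ⟨(-2,0,2,0), by decide, by simp only [ψ]; push_cast; module⟩
  · exact ⟨(-2,0,-2,0), by decide, by simp only [ψ]; push_cast; module⟩
  · exact ⟨(2,0,0,2), by decide, by simp only [ψ]; push_cast; module⟩
  · exact ⟨(2,0,0,-2), by decide, by simp only [ψ]; push_cast; module⟩
  · exact ⟨(-2,0,0,2), by decide, by simp only [ψ]; push_cast; module⟩
  · exact ⟨(-2,0,0,-2), by decide, by simp only [ψ]; push_cast; module⟩
  · exact ⟨(0,2,2,0), by decide, by simp only [ψ]; push_cast; module⟩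
  · exact ⟨(0,2,-2,0), by decide, by simp only [ψ]; push_cast; module⟩
  · exact ⟨(0,-2,2,0), by decide, by simp only [ψ]; push_cast; module⟩
  · exact ⟨(0,-2,-2,0), by decide, by simp only [ψ]; push_cast; module⟩
  · exact ⟨(0,2,0,2), by decide, by simp only [ψ]; push_cast; module⟩
  · exact ⟨(0,2,0,-2), by decide, by simp only [ψ]; push_cast; module⟩
  · exact ⟨(0,-2,0,2), by decide, by simp only [ψ]; push_cast; module⟩
  · exact ⟨(0,-2,0,-2), by decide, by simp only [ψ]; push_cast; module⟩
  · exact ⟨(0,0,2,2), by decide, by simp only [ψ]; push_cast; module⟩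
  · exact ⟨(0,0,2,-2), by decide, by simp only [ψ]; push_cast; module⟩
  · exact ⟨(0,0,-2,2), by decide, by simp only [ψ]; push_cast; module⟩
  · exact ⟨(0,0,-2,-2), by decide, by simp only [ψ]; push_cast; module⟩


lemma sh1_bwd : ∀ w ∈ R1L, ψ w ∈ Sh1 := by
  intro w hw
  fin_cases hw
  · exact ⟨0, Or.inl (by simp only [ψ]; push_cast; module)⟩
  · exact ⟨0, Or.inr (by simp only [ψ]; push_cast; module)⟩
  · exact ⟨1, Or.inl (by simp only [ψ]; push_cast; module)⟩
  · exact ⟨1, Or.inr (by simp only [ψ]; push_cast; module)⟩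
  · exact ⟨2, Or.inl (by simp only [ψ]; push_cast; module)⟩
  · exact ⟨2, Or.inr (by simp only [ψ]; push_cast; module)⟩
  · exact ⟨3, Or.inl (by simp only [ψ]; push_cast; module)⟩
  · exact ⟨3, Or.inr (by simp only [ψ]; push_cast; module)⟩


lemma sh2_bwd : ∀ w ∈ R2L, ψ w ∈ Sh2 := by
  intro w hw
  fin_cases hw
  · exact ⟨![(1:ℝ),(1:ℝ),(1:ℝ),(1:ℝ)], by intro i; fin_cases i <;> norm_num, by simp, by rw [Fin.sum_univ_four]; norm_num [ψ] <;> (push_cast; module)⟩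
  · exact ⟨![(1:ℝ),(1:ℝ),(-1:ℝ),(-1:ℝ)], by intro i; fin_cases i <;> norm_num, by simp, by rw [Fin.sum_univ_four]; norm_num [ψ] <;> (push_cast; module)⟩
  · exact ⟨![(1:ℝ),(-1:ℝ),(1:ℝ),(-1:ℝ)], by intro i; fin_cases i <;> norm_num, by simp, by rw [Fin.sum_univ_four]; norm_num [ψ] <;> (push_cast; module)⟩
  · exact ⟨![(1:ℝ),(-1:ℝ),(-1:ℝ),(1:ℝ)], by intro i; fin_cases i <;> norm_num, by simp, by rw [Fin.sum_univ_four]; norm_num [ψ] <;> (push_cast; module)⟩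
  · exact ⟨![(-1:ℝ),(1:ℝ),(1:ℝ),(-1:ℝ)], by intro i; fin_cases i <;> norm_num, by simp, by rw [Fin.sum_univ_four]; norm_num [ψ] <;> (push_cast; module)⟩
  · exact ⟨![(-1:ℝ),(1:ℝ),(-1:ℝ),(1:ℝ)], by intro i; fin_cases i <;> norm_num, by simp, by rw [Fin.sum_univ_four]; norm_num [ψ] <;> (push_cast; module)⟩
  · exact ⟨![(-1:ℝ),(-1:ℝ),(1:ℝ),(1:ℝ)], by intro i; fin_cases i <;> norm_num, by simp, by rw [Fin.sum_univ_four]; norm_num [ψ] <;> (push_cast; module)⟩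
  · exact ⟨![(-1:ℝ),(-1:ℝ),(-1:ℝ),(-1:ℝ)], by intro i; fin_cases i <;> norm_num, by simp, by rw [Fin.sum_univ_four]; norm_num [ψ] <;> (push_cast; module)⟩


lemma sh3_bwd : ∀ w ∈ R3L, ψ w ∈ Sh3 := by
  intro w hw
  fin_cases hw
  · exact ⟨![(1:ℝ),(1:ℝ),(1:ℝ),(-1:ℝ)], by intro i; fin_cases i <;> norm_num, by simp, by rw [Fin.sum_univ_four]; norm_num [ψ] <;> (push_cast; module)⟩
  · exact ⟨![(1:ℝ),(1:ℝ),(-1:ℝ),(1:ℝ)], by intro i; fin_cases i <;> norm_num, by simp, by rw [Fin.sum_univ_four]; norm_num [ψ] <;> (push_cast; module)⟩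
  · exact ⟨![(1:ℝ),(-1:ℝ),(1:ℝ),(1:ℝ)], by intro i; fin_cases i <;> norm_num, by simp, by rw [Fin.sum_univ_four]; norm_num [ψ] <;> (push_cast; module)⟩
  · exact ⟨![(1:ℝ),(-1:ℝ),(-1:ℝ),(-1:ℝ)], by intro i; fin_cases i <;> norm_num, by simp, by rw [Fin.sum_univ_four]; norm_num [ψ] <;> (push_cast; module)⟩
  · exact ⟨![(-1:ℝ),(1:ℝ),(1:ℝ),(1:ℝ)], by intro i; fin_cases i <;> norm_num, by simp, by rw [Fin.sum_univ_four]; norm_num [ψ] <;> (push_cast; module)⟩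
  · exact ⟨![(-1:ℝ),(1:ℝ),(-1:ℝ),(-1:ℝ)], by intro i; fin_cases i <;> norm_num, by simp, by rw [Fin.sum_univ_four]; norm_num [ψ] <;> (push_cast; module)⟩
  · exact ⟨![(-1:ℝ),(-1:ℝ),(1:ℝ),(-1:ℝ)], by intro i; fin_cases i <;> norm_num, by simp, by rw [Fin.sum_univ_four]; norm_num [ψ] <;> (push_cast; module)⟩
  · exact ⟨![(-1:ℝ),(-1:ℝ),(-1:ℝ),(1:ℝ)], by intro i; fin_cases i <;> norm_num, by simp, by rw [Fin.sum_univ_four]; norm_num [ψ] <;> (push_cast; module)⟩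


lemma long_bwd : ∀ w ∈ RlongL, ψ w ∈ LongF4 := by
  intro w hw
  fin_cases hw
  · exact ⟨0, 1, by decide, (1:ℝ), (1:ℝ), Or.inl rfl, Or.inl rfl, by simp only [ψ]; push_cast; module⟩
  · exact ⟨0, 1, by decide, (1:ℝ), (-1:ℝ), Or.inl rfl, Or.inr rfl, by simp only [ψ]; push_cast; module⟩
  · exact ⟨0, 1, by decide, (-1:ℝ), (1:ℝ), Or.inr rfl, Or.inl rfl, by simp only [ψ]; push_cast; module⟩
  · exact ⟨0, 1, by decide, (-1:ℝ), (-1:ℝ), Or.inr rfl, Or.inr rfl, by simp only [ψ]; push_cast; module⟩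
  · exact ⟨0, 2, by decide, (1:ℝ), (1:ℝ), Or.inl rfl, Or.inl rfl, by simp only [ψ]; push_cast; module⟩
  · exact ⟨0, 2, by decide, (1:ℝ), (-1:ℝ), Or.inl rfl, Or.inr rfl, by simp only [ψ]; push_cast; module⟩
  · exact ⟨0, 2, by decide, (-1:ℝ), (1:ℝ), Or.inr rfl, Or.inl rfl, by simp only [ψ]; push_cast; module⟩
  · exact ⟨0, 2, by decide, (-1:ℝ), (-1:ℝ), Or.inr rfl, Or.inr rfl, by simp only [ψ]; push_cast; module⟩
  · exact ⟨0, 3, by decide, (1:ℝ), (1:ℝ), Or.inl rfl, Or.inl rfl, by simp only [ψ]; push_cast; module⟩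
  · exact ⟨0, 3, by decide, (1:ℝ), (-1:ℝ), Or.inl rfl, Or.inr rfl, by simp only [ψ]; push_cast; module⟩
  · exact ⟨0, 3, by decide, (-1:ℝ), (1:ℝ), Or.inr rfl, Or.inl rfl, by simp only [ψ]; push_cast; module⟩
  · exact ⟨0, 3, by decide, (-1:ℝ), (-1:ℝ), Or.inr rfl, Or.inr rfl, by simp only [ψ]; push_cast; module⟩
  · exact ⟨1, 2, by decide, (1:ℝ), (1:ℝ), Or.inl rfl, Or.inl rfl, by simp only [ψ]; push_cast; module⟩
  · exact ⟨1, 2, by decide, (1:ℝ), (-1:ℝ), Or.inl rfl, Or.inr rfl, by simp only [ψ]; push_cast; module⟩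
  · exact ⟨1, 2, by decide, (-1:ℝ), (1:ℝ), Or.inr rfl, Or.inl rfl, by simp only [ψ]; push_cast; module⟩
  · exact ⟨1, 2, by decide, (-1:ℝ), (-1:ℝ), Or.inr rfl, Or.inr rfl, by simp only [ψ]; push_cast; module⟩
  · exact ⟨1, 3, by decide, (1:ℝ), (1:ℝ), Or.inl rfl, Or.inl rfl, by simp only [ψ]; push_cast; module⟩
  · exact ⟨1, 3, by decide, (1:ℝ), (-1:ℝ), Or.inl rfl, Or.inr rfl, by simp only [ψ]; push_cast; module⟩
  · exact ⟨1, 3, by decide, (-1:ℝ), (1:ℝ), Or.inr rfl, Or.inl rfl, by simp only [ψ]; push_cast; module⟩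
  · exact ⟨1, 3, by decide, (-1:ℝ), (-1:ℝ), Or.inr rfl, Or.inr rfl, by simp only [ψ]; push_cast; module⟩
  · exact ⟨2, 3, by decide, (1:ℝ), (1:ℝ), Or.inl rfl, Or.inl rfl, by simp only [ψ]; push_cast; module⟩
  · exact ⟨2, 3, by decide, (1:ℝ), (-1:ℝ), Or.inl rfl, Or.inr rfl, by simp only [ψ]; push_cast; module⟩
  · exact ⟨2, 3, by decide, (-1:ℝ), (1:ℝ), Or.inr rfl, Or.inl rfl, by simp only [ψ]; push_cast; module⟩
  · exact ⟨2, 3, by decide, (-1:ℝ), (-1:ℝ), Or.inr rfl, Or.inr rfl, by simp only [ψ]; push_cast; module⟩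


lemma delta_fwd {v : EuclideanSpace ℝ (Fin 4)} (h : v ∈ ΔF4) : ∃ w ∈ Rall, v = ψ w := by
  rcases h with ((h | h) | h) | h
  · obtain ⟨w, hw, he⟩ := long_fwd h
    exact ⟨w, by simp [Rall, List.mem_append, hw], he⟩
  · obtain ⟨w, hw, he⟩ := sh1_fwd h
    exact ⟨w, by simp [Rall, List.mem_append, hw], he⟩
  · obtain ⟨w, hw, he⟩ := sh2_fwd h
    exact ⟨w, by simp [Rall, List.mem_append, hw], he⟩
  · obtain ⟨w, hw, he⟩ := sh3_fwd h
    exact ⟨w, by simp [Rall, List.mem_append, hw], he⟩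

lemma delta_bwd : ∀ w ∈ Rall, ψ w ∈ ΔF4 := by
  intro w hw
  simp only [Rall, List.mem_append] at hw
  rcases hw with ((hw | hw) | hw) | hw
  · exact Or.inl (Or.inl (Or.inl (long_bwd w hw)))
  · exact Or.inl (Or.inl (Or.inr (sh1_bwd w hw)))
  · exact Or.inl (Or.inr (sh2_bwd w hw))
  · exact Or.inr (sh3_bwd w hw)

set_option synthInstance.maxSize 1000 in
set_option maxHeartbeats 4000000 in
lemma key : ∀ a ∈ Rall, ∀ b ∈ Rall,
    ((a + b ∈ Rall ∧ a - b ∈ Rall) ↔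
      (((a ∈ R1L ∧ b ∈ R1L) ∨ (a ∈ R2L ∧ b ∈ R2L) ∨ (a ∈ R3L ∧ b ∈ R3L)) ∧
        a ≠ b ∧ a ≠ -b)) := by decide

/-- In `F₄`, `(α, β)` is matched (both `α + β` and `α − β` are roots)
iff `α` and `β` lie in the same short class `Sh_i` and `α ≠ ±β`. -/
theorem matched_pairs_F4 (α β : EuclideanSpace ℝ (Fin 4))
    (hα : α ∈ ΔF4) (hβ : β ∈ ΔF4) :
    (α + β ∈ ΔF4 ∧ α - β ∈ ΔF4) ↔
      (((α ∈ Sh1 ∧ β ∈ Sh1) ∨ (α ∈ Sh2 ∧ β ∈ Sh2) ∨ (α ∈ Sh3 ∧ β ∈ Sh3)) ∧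
        α ≠ β ∧ α ≠ -β) := by
  obtain ⟨a, ha, rfl⟩ := delta_fwd hα
  obtain ⟨b, hb, rfl⟩ := delta_fwd hβ
  have K := key a ha b hb
  constructor
  · rintro ⟨h1, h2⟩
    rw [← psi_add] at h1
    rw [← psi_sub] at h2
    obtain ⟨c, hc, hce⟩ := delta_fwd h1
    obtain ⟨d, hd, hde⟩ := delta_fwd h2
    have hab : a + b ∈ Rall := by rw [psi_inj hce]; exact hc
    have hsub : a - b ∈ Rall := by rw [psi_inj hde]; exact hd
    obtain ⟨hcls, hne1, hne2⟩ := K.mp ⟨hab, hsub⟩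
    refine ⟨?_, ?_, ?_⟩
    · rcases hcls with ⟨h, h'⟩ | ⟨h, h'⟩ | ⟨h, h'⟩
      · exact Or.inl ⟨sh1_bwd _ h, sh1_bwd _ h'⟩
      · exact Or.inr (Or.inl ⟨sh2_bwd _ h, sh2_bwd _ h'⟩)
      · exact Or.inr (Or.inr ⟨sh3_bwd _ h, sh3_bwd _ h'⟩)
    · exact fun hq => hne1 (psi_inj hq)
    · exact fun hq => hne2 (psi_inj (by rw [hq, psi_neg]))
  · rintro ⟨hcls, hne1, hne2⟩
    have hcls' : (a ∈ R1L ∧ b ∈ R1L) ∨ (a ∈ R2L ∧ b ∈ R2L) ∨ (a ∈ R3L ∧ b ∈ R3L) := by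
      rcases hcls with ⟨h, h'⟩ | ⟨h, h'⟩ | ⟨h, h'⟩
      · obtain ⟨w, hw, he⟩ := sh1_fwd h
        obtain ⟨w', hw', he'⟩ := sh1_fwd h'
        exact Or.inl ⟨by rw [psi_inj he]; exact hw, by rw [psi_inj he']; exact hw'⟩
      · obtain ⟨w, hw, he⟩ := sh2_fwd h
        obtain ⟨w', hw', he'⟩ := sh2_fwd h'
        exact Or.inr (Or.inl ⟨by rw [psi_inj he]; exact hw, by rw [psi_inj he']; exact hw'⟩)
      · obtain ⟨w, hw, he⟩ := sh3_fwd h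
        obtain ⟨w', hw', he'⟩ := sh3_fwd h'
        exact Or.inr (Or.inr ⟨by rw [psi_inj he]; exact hw, by rw [psi_inj he']; exact hw'⟩)
    have h1 : a ≠ b := fun q => hne1 (congrArg ψ q)
    have h2 : a ≠ -b := fun q => hne2 (by rw [q, psi_neg])
    obtain ⟨hs, hd⟩ := K.mpr ⟨hcls', h1, h2⟩
    constructor
    · have := delta_bwd _ hs
      rwa [psi_add] at this
    · have := delta_bwd _ hd
      rwa [psi_sub] at this
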